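/- Suppose M_r ∈ ℝ^{ρ_r×p} satisfies (1−δ)‖z‖₂² ≤ (p/ρ_r)‖M_r z‖₂² ≤ (1+δ)‖z‖₂² for all z ∈ span(P_{k_r}), with δ ∈ (0,1). Assume λ_{k_r+1} > 0 and γ'_r > 0. Let Ū ∈ ℝ^{p×k} have all columns in span(P_{k_r}), let Ẽ^u ∈ ℝ^{ρ_r×k}, and set Ũ = M_r Ū + Ẽ^u. Let U* be a minimizer over U ∈ ℝ^{p×k} of ‖M_r U − Ũ‖_F² + γ'_r tr(U^⊤ L_r U), and set Ū* = P_{k_r} P_{k_r}^⊤ U*. Then ‖Ū* − Ū‖_F ≤ √(2p/(ρ_r(1−δ))) [ (2 + 1/√(γ'_r λ_{k_r+1})) ‖Ẽ^u‖_F + (√(λ_{k_r}/λ_{k_r+1}) + √(γ'_r λ_{k_r})) ‖Ū‖_F ]. -/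

import Mathlib

open Matrix

/-- Frobenius norm of a real matrix. -/
noncomputable def frobNorm {m n : Type*} [Fintype m] [Fintype n] (A : Matrix m n ℝ) : ℝ :=
  Real.sqrt (∑ i, ∑ j, (A i j) ^ 2)

/-- Euclidean norm of a real vector. -/
noncomputable def vecNorm {n : Type*} [Fintype n] (x : n → ℝ) : ℝ :=
  Real.sqrt (∑ i, (x i) ^ 2)

/-- A row-selection matrix: its rows are distinct standard basis vectors of `ℝ^p`. -/
def IsRowSelection {ρ p : ℕ} (M : Matrix (Fin ρ) (Fin p) ℝ) : Prop :=
  ∃ f : Fin ρ → Fin p, Function.Injective f ∧ ∀ i j, M i j = if j = f i then 1 else 0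

/-- A column-selection matrix: its columns are distinct standard basis vectors of `ℝ^n`. -/
def IsColSelection {n ρ : ℕ} (M : Matrix (Fin n) (Fin ρ) ℝ) : Prop :=
  ∃ f : Fin ρ → Fin n, Function.Injective f ∧ ∀ i j, M i j = if i = f j then 1 else 0

/-- `y` lies in the span of the columns of `P`. -/
def inColSpan {p k : ℕ} (P : Matrix (Fin p) (Fin k) ℝ) (y : Fin p → ℝ) : Prop :=
  ∃ c : Fin k → ℝ, y = P.mulVec c

/-- `Y ∈ LR(P, Q)`: every column of `Y` lies in the column span of `P` and every row of `Y`
lies in the column span of `Q`. -/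
def memLR {p n kr kc : ℕ} (P : Matrix (Fin p) (Fin kr) ℝ) (Q : Matrix (Fin n) (Fin kc) ℝ)
    (Y : Matrix (Fin p) (Fin n) ℝ) : Prop :=
  (∀ j, inColSpan P (fun i => Y i j)) ∧ (∀ i, inColSpan Q (fun j => Y i j))

/-- Graph cumulative coherence `ν = max_i √n ‖Q^⊤ e_i‖₂`. -/
noncomputable def coherence {n k : ℕ} (Q : Matrix (Fin n) (Fin k) ℝ) : ℝ :=
  ⨆ i : Fin n, Real.sqrt n * vecNorm (fun j => Q i j)

section aux
attribute [local instance] Matrix.frobeniusNormedAddCommGroup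
variable {m n p q : Type*} [Fintype m] [Fintype n] [Fintype p] [Fintype q] [DecidableEq p]

lemma frobNorm_eq_norm (A : Matrix m n ℝ) : frobNorm A = ‖A‖ := by
  rw [Matrix.frobenius_norm_def, frobNorm, Real.sqrt_eq_rpow]
  norm_num [Real.norm_eq_abs, sq_abs]

lemma fsq_nonneg (A : Matrix m n ℝ) : 0 ≤ ∑ i, ∑ j, (A i j) ^ 2 := by positivity

lemma frobNorm_nonneg (A : Matrix m n ℝ) : 0 ≤ frobNorm A := Real.sqrt_nonneg _

lemma frobNorm_sq (A : Matrix m n ℝ) : (frobNorm A) ^ 2 = ∑ i, ∑ j, (A i j) ^ 2 :=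
  Real.sq_sqrt (fsq_nonneg A)

lemma frobNorm_add_le (A B : Matrix m n ℝ) : frobNorm (A + B) ≤ frobNorm A + frobNorm B := by
  simp only [frobNorm_eq_norm]; exact norm_add_le A B

lemma frobNorm_neg (A : Matrix m n ℝ) : frobNorm (-A) = frobNorm A := by
  simp only [frobNorm_eq_norm]; exact norm_neg A

lemma frobNorm_sq_eq_trace (A : Matrix m n ℝ) : (frobNorm A) ^ 2 = Matrix.trace (Aᵀ * A) := by
  rw [frobNorm_sq, Matrix.trace]
  simp only [Matrix.diag_apply, Matrix.mul_apply, Matrix.transpose_apply]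
  rw [Finset.sum_comm]
  congr 1; ext i; congr 1; ext j; ring

lemma frobNorm_mul_orth {P : Matrix p p ℝ} (hP : Pᵀ * P = 1) (X : Matrix p n ℝ) :
    frobNorm (P * X) = frobNorm X := by
  have h : (frobNorm (P * X))^2 = (frobNorm X)^2 := by
    rw [frobNorm_sq_eq_trace, frobNorm_sq_eq_trace, Matrix.transpose_mul, Matrix.mul_assoc,
      ← Matrix.mul_assoc Pᵀ P X, hP, Matrix.one_mul]
  have h1 := frobNorm_nonneg (P * X); have h2 := frobNorm_nonneg X
  nlinarith [h]

lemma trace_diag_quad (d : p → ℝ) (Y : Matrix p n ℝ) :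
    Matrix.trace (Yᵀ * (Matrix.diagonal d * Y)) = ∑ i, d i * ∑ j, (Y i j) ^ 2 := by
  rw [Matrix.trace]
  simp only [Matrix.diag_apply, Matrix.mul_apply, Matrix.transpose_apply,
    Matrix.diagonal_mul]
  rw [Finset.sum_comm]
  congr 1; ext i
  rw [Finset.mul_sum]
  congr 1; ext j
  rw [Finset.sum_eq_single i (fun b _ hb => by simp [Matrix.diagonal_apply, Ne.symm hb])
    (by simp)]
  simp [Matrix.diagonal_apply]; ring

end aux

section fin
variable {ρ p n k : ℕ}

lemma rowSel_apply {M : Matrix (Fin ρ) (Fin p) ℝ} (hM : IsRowSelection M)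
    (X : Matrix (Fin p) (Fin n) ℝ) :
    ∃ f : Fin ρ → Fin p, Function.Injective f ∧ ∀ i j, (M * X) i j = X (f i) j := by
  obtain ⟨f, hf, hMf⟩ := hM
  refine ⟨f, hf, fun i j => ?_⟩
  rw [Matrix.mul_apply]
  rw [Finset.sum_eq_single (f i) (fun b _ hb => by simp [hMf, hb]) (by simp)]
  simp [hMf]

lemma frobNorm_rowSel_le {M : Matrix (Fin ρ) (Fin p) ℝ} (hM : IsRowSelection M)
    (X : Matrix (Fin p) (Fin n) ℝ) : frobNorm (M * X) ≤ frobNorm X := by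
  obtain ⟨f, hf, hfa⟩ := rowSel_apply hM X
  apply Real.sqrt_le_sqrt
  simp only [hfa]
  calc ∑ i : Fin ρ, ∑ j, (X (f i) j) ^ 2
      = ∑ l ∈ Finset.univ.image f, ∑ j, (X l j) ^ 2 := by
        rw [Finset.sum_image (fun a _ b _ h => hf h)]
    _ ≤ ∑ l : Fin p, ∑ j, (X l j) ^ 2 := by
        apply Finset.sum_le_sum_of_subset_of_nonneg (Finset.subset_univ _)
        intro l _ _; positivity

lemma col_mul (A : Matrix (Fin ρ) (Fin p) ℝ) (X : Matrix (Fin p) (Fin n) ℝ) (j : Fin n) :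
    (fun i => (A * X) i j) = A.mulVec (fun i => X i j) := by
  ext i; rw [Matrix.mul_apply, Matrix.mulVec]; rfl

lemma inColSpan_cols_mul (Pkr : Matrix (Fin p) (Fin k) ℝ) (Y : Matrix (Fin k) (Fin n) ℝ)
    (j : Fin n) : inColSpan Pkr (fun i => (Pkr * Y) i j) := ⟨fun l => Y l j, col_mul _ _ _⟩

lemma inColSpan_sub {Pkr : Matrix (Fin p) (Fin k) ℝ} {y z : Fin p → ℝ}
    (hy : inColSpan Pkr y) (hz : inColSpan Pkr z) : inColSpan Pkr (y - z) := by
  obtain ⟨c, rfl⟩ := hy; obtain ⟨d, rfl⟩ := hz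
  exact ⟨c - d, by rw [Matrix.mulVec_sub]⟩

lemma vecNorm_sq_col (X : Matrix (Fin p) (Fin n) ℝ) (j : Fin n) :
    (vecNorm (fun i => X i j)) ^ 2 = ∑ i, (X i j) ^ 2 := Real.sq_sqrt (by positivity)

end fin

section fin2
variable {ρ p n k : ℕ}

lemma sum_castLE_ite (h : k ≤ p) (g : Fin p → ℝ) :
    ∑ l : Fin k, g (Fin.castLE h l) = ∑ l : Fin p, if (l : ℕ) < k then g l else 0 := by
  rw [← Finset.sum_filter]
  rw [show (Finset.univ.filter (fun l : Fin p => (l : ℕ) < k))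
      = Finset.univ.image (Fin.castLE h) from ?_]
  · rw [Finset.sum_image (fun a _ b _ hab => by
      exact Fin.castLE_injective h hab)]
  · ext a
    simp only [Finset.mem_filter, Finset.mem_univ, true_and, Finset.mem_image]
    constructor
    · intro ha; exact ⟨⟨a, ha⟩, by simp [Fin.castLE]⟩
    · rintro ⟨b, -, rfl⟩; exact b.isLt

lemma rip_matrix {Mr : Matrix (Fin ρ) (Fin p) ℝ} {Pkr : Matrix (Fin p) (Fin k) ℝ}
    {δ : ℝ} {nn : ℕ}
    (hRIP : ∀ z : Fin p → ℝ, inColSpan Pkr z →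
      (1 - δ) * (vecNorm z) ^ 2 ≤ ((p : ℝ) / ρ) * (vecNorm (Mr.mulVec z)) ^ 2)
    (X : Matrix (Fin p) (Fin nn) ℝ) (hX : ∀ j, inColSpan Pkr (fun i => X i j)) :
    (1 - δ) * (frobNorm X) ^ 2 ≤ ((p : ℝ) / ρ) * (frobNorm (Mr * X)) ^ 2 := by
  have e1 : ∑ i, ∑ j, (X i j) ^ 2 = ∑ j, ∑ i, (X i j) ^ 2 := Finset.sum_comm
  have e2 : ∑ i, ∑ j, ((Mr * X) i j) ^ 2 = ∑ j, ∑ i, ((Mr * X) i j) ^ 2 := Finset.sum_comm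
  rw [frobNorm_sq, frobNorm_sq, e1, e2, Finset.mul_sum, Finset.mul_sum]
  apply Finset.sum_le_sum
  intro j _
  have h := hRIP _ (hX j)
  rw [vecNorm, vecNorm, Real.sq_sqrt (by positivity), Real.sq_sqrt (by positivity)] at h
  calc (1-δ) * ∑ i, X i j ^ 2 ≤ (↑p/↑ρ) * ∑ i, Mr.mulVec (fun i => X i j) i ^ 2 := h
    _ = (↑p/↑ρ) * ∑ i, (Mr * X) i j ^ 2 := by rw [← col_mul]

end fin2

set_option maxHeartbeats 1000000 in
/-- error bound `‖Ū* − Ū‖_F` for the split subspace decoder, where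
`Ū* = P_{k_r} P_{k_r}^⊤ U*` and `U*` minimizes `‖M_r U − Ũ‖_F² + γ'_r tr(U^⊤ L_r U)`.
The 1-indexed eigenvalues `λ_{k_r}`, `λ_{k_r+1}` of `L_r` are `ev ⟨k_r−1⟩`, `ev ⟨k_r⟩`. -/
theorem approximate_decoder_U_bound
    (p ρr kr k : ℕ) (hkr0 : 0 < kr) (hkr : kr < p)
    (Lr : Matrix (Fin p) (Fin p) ℝ) (hLr : Lr.PosSemidef)
    (ev : Fin p → ℝ) (hev : Monotone ev)
    (P : Matrix (Fin p) (Fin p) ℝ) (hPorth : Pᵀ * P = 1)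
    (hLrP : Lr * P = P * Matrix.diagonal ev)
    (Pkr : Matrix (Fin p) (Fin kr) ℝ) (hPkr : Pkr = P.submatrix id (Fin.castLE hkr.le))
    (Mr : Matrix (Fin ρr) (Fin p) ℝ) (hMr : IsRowSelection Mr)
    (δ : ℝ) (hδ : δ ∈ Set.Ioo (0 : ℝ) 1)
    (hRIP : ∀ z : Fin p → ℝ, inColSpan Pkr z →
      (1 - δ) * (vecNorm z) ^ 2 ≤ ((p : ℝ) / ρr) * (vecNorm (Mr.mulVec z)) ^ 2 ∧
      ((p : ℝ) / ρr) * (vecNorm (Mr.mulVec z)) ^ 2 ≤ (1 + δ) * (vecNorm z) ^ 2)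
    (hlam1 : 0 < ev ⟨kr, hkr⟩)
    (γr' : ℝ) (hγr' : 0 < γr')
    (Ubar : Matrix (Fin p) (Fin k) ℝ) (hUbar : ∀ j, inColSpan Pkr (fun i => Ubar i j))
    (Eu : Matrix (Fin ρr) (Fin k) ℝ)
    (Util : Matrix (Fin ρr) (Fin k) ℝ) (hUtil : Util = Mr * Ubar + Eu)
    (Ustar : Matrix (Fin p) (Fin k) ℝ)
    (hmin : ∀ U : Matrix (Fin p) (Fin k) ℝ,
      (frobNorm (Mr * Ustar - Util)) ^ 2 + γr' * Matrix.trace (Ustarᵀ * Lr * Ustar) ≤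
      (frobNorm (Mr * U - Util)) ^ 2 + γr' * Matrix.trace (Uᵀ * Lr * U)) :
    frobNorm (Pkr * Pkrᵀ * Ustar - Ubar) ≤
      Real.sqrt (2 * p / ((ρr : ℝ) * (1 - δ))) *
        ((2 + 1 / Real.sqrt (γr' * ev ⟨kr, hkr⟩)) * frobNorm Eu +
          (Real.sqrt (ev ⟨kr - 1, by omega⟩ / ev ⟨kr, hkr⟩)
            + Real.sqrt (γr' * ev ⟨kr - 1, by omega⟩)) * frobNorm Ubar) := by
  obtain ⟨hδ0, hδ1⟩ := hδ
  have hkrp : kr ≤ p := hkr.le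
  have hkrm : kr - 1 < p := by omega
  have hPPt : P * Pᵀ = 1 := mul_eq_one_comm.mp hPorth
  have hLreq : Lr = P * Matrix.diagonal ev * Pᵀ := by
    calc Lr = Lr * (P * Pᵀ) := by rw [hPPt, Matrix.mul_one]
      _ = (Lr * P) * Pᵀ := by rw [Matrix.mul_assoc]
      _ = P * Matrix.diagonal ev * Pᵀ := by rw [hLrP]
  -- eigenvalues are nonnegative
  have hevnn : ∀ i : Fin p, 0 ≤ ev i := by
    intro i
    have hone : ∑ r, P r i * P r i = 1 := by
      have h := congrFun (congrFun hPorth i) i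
      simpa [Matrix.mul_apply, Matrix.transpose_apply, Matrix.one_apply] using h
    have hcol : Lr *ᵥ (fun r => P r i) = fun r => ev i * P r i := by
      ext r
      have h := congrFun (congrFun hLrP r) i
      simp only [Matrix.mul_apply] at h
      have h2 : ∑ l, P r l * Matrix.diagonal ev l i = P r i * ev i := by
        rw [Finset.sum_eq_single i (fun b _ hb => by simp [Matrix.diagonal_apply, hb])
          (by simp)]
        simp [Matrix.diagonal_apply]
      show ∑ l, Lr r l * P l i = ev i * P r i
      rw [h, h2]; ring
    have hquad := hLr.dotProduct_mulVec_nonneg (fun r => P r i)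
    rw [hcol] at hquad
    have heval : dotProduct (star (fun r => P r i)) (fun r => ev i * P r i) = ev i := by
      simp only [dotProduct, Pi.star_apply, star_trivial]
      calc ∑ r, P r i * (ev i * P r i) = ev i * ∑ r, P r i * P r i := by
            rw [Finset.mul_sum]; apply Finset.sum_congr rfl; intro r _; ring
        _ = ev i := by rw [hone, mul_one]
    rw [heval] at hquad
    exact hquad
  -- coordinates
  have hUstar : Ustar = P * (Pᵀ * Ustar) := by
    rw [← Matrix.mul_assoc, hPPt, Matrix.one_mul]
  have hPkrApp : ∀ r l, Pkr r l = P r (Fin.castLE hkrp l) := by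
    intro r l; rw [hPkr]; rfl
  -- trace formula
  have htrace : ∀ (X : Matrix (Fin p) (Fin k) ℝ),
      Matrix.trace (Xᵀ * Lr * X) = ∑ i, ev i * ∑ j, ((Pᵀ * X) i j) ^ 2 := by
    intro X
    have hX : X = P * (Pᵀ * X) := by rw [← Matrix.mul_assoc, hPPt, Matrix.one_mul]
    conv_lhs => rw [hLreq, hX]
    rw [Matrix.transpose_mul]
    rw [show (Pᵀ * X)ᵀ * Pᵀ * (P * Matrix.diagonal ev * Pᵀ) * (P * (Pᵀ * X))
        = (Pᵀ * X)ᵀ * (Matrix.diagonal ev * (Pᵀ * X)) from by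
      simp only [Matrix.mul_assoc]
      rw [show Pᵀ * (P * (Matrix.diagonal ev * (Pᵀ * (P * (Pᵀ * X)))))
          = (Pᵀ * P) * (Matrix.diagonal ev * ((Pᵀ * P) * (Pᵀ * X))) from by
        simp only [Matrix.mul_assoc]]
      rw [hPorth, Matrix.one_mul, Matrix.one_mul]]
    exact trace_diag_quad _ _
  -- rows ≥ kr of Pᵀ Ubar vanish
  have hYzero : ∀ (i : Fin p) (j : Fin k), kr ≤ (i : ℕ) → (Pᵀ * Ubar) i j = 0 := by
    intro i j hi
    obtain ⟨c, hc⟩ := hUbar j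
    have h1 : (Pᵀ * Ubar) i j = ((Pᵀ * Pkr) *ᵥ c) i := by
      have hcol := col_mul Pᵀ Ubar j
      rw [show (Pᵀ * Ubar) i j = (fun i' => (Pᵀ * Ubar) i' j) i from rfl, hcol, hc,
        Matrix.mulVec_mulVec]
    have h2 : ∀ l : Fin kr, (Pᵀ * Pkr) i l = 0 := by
      intro l
      have h3 : (Pᵀ * Pkr) i l = (Pᵀ * P) i (Fin.castLE hkrp l) := by
        simp only [Matrix.mul_apply, Matrix.transpose_apply, hPkrApp]
      rw [h3, hPorth]
      apply Matrix.one_apply_ne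
      intro heq
      have hv : (i : ℕ) = (l : ℕ) := congrArg Fin.val heq
      have := l.isLt
      omega
    rw [h1]
    simp [Matrix.mulVec, dotProduct, h2]
  -- frobNorm facts
  have hfrUbar : frobNorm (Pᵀ * Ubar) = frobNorm Ubar :=
    frobNorm_mul_orth (by rwa [Matrix.transpose_transpose]) Ubar
  have he0 : 0 ≤ frobNorm Eu := frobNorm_nonneg _
  have hu0 : 0 ≤ frobNorm Ubar := frobNorm_nonneg _
  -- trace upper bound for Ubar
  have htrBar : Matrix.trace (Ubarᵀ * Lr * Ubar) ≤ ev ⟨kr - 1, hkrm⟩ * (frobNorm Ubar) ^ 2 := by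
    rw [htrace Ubar]
    calc ∑ i, ev i * ∑ j, ((Pᵀ * Ubar) i j) ^ 2
        ≤ ∑ i, ev ⟨kr - 1, hkrm⟩ * ∑ j, ((Pᵀ * Ubar) i j) ^ 2 := by
          apply Finset.sum_le_sum
          intro i _
          by_cases hi : (i : ℕ) < kr
          · apply mul_le_mul_of_nonneg_right _ (by positivity)
            exact hev (show i ≤ ⟨kr - 1, hkrm⟩ from by
              rw [Fin.le_def]; simp; omega)
          · have hz : ∀ j, (Pᵀ * Ubar) i j = 0 := fun j => hYzero i j (le_of_not_gt hi)
            simp [hz]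
      _ = ev ⟨kr - 1, hkrm⟩ * (frobNorm Ubar) ^ 2 := by
          rw [← Finset.mul_sum, ← hfrUbar, frobNorm_sq]
  -- the projection in coordinates
  have hUbarstar : Pkr * Pkrᵀ * Ustar
      = P * Matrix.of (fun (i : Fin p) (j : Fin k) => if (i : ℕ) < kr then (Pᵀ * Ustar) i j else 0) := by
    ext i j
    rw [Matrix.mul_assoc, Matrix.mul_apply]
    have hBB : ∀ (l : Fin kr), Pkr i l * (Pkrᵀ * Ustar) l j
        = P i (Fin.castLE hkrp l) * (Pᵀ * Ustar) (Fin.castLE hkrp l) j := by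
      intro l
      rw [hPkrApp]
      congr 1
      simp only [Matrix.mul_apply, Matrix.transpose_apply, hPkrApp]
    rw [Finset.sum_congr rfl (fun l _ => hBB l)]
    rw [sum_castLE_ite hkrp (fun l => P i l * (Pᵀ * Ustar) l j)]
    rw [Matrix.mul_apply]
    apply Finset.sum_congr rfl
    intro l _
    simp only [Matrix.of_apply, mul_ite, mul_zero]
  have hDelta : Ustar - Pkr * Pkrᵀ * Ustar
      = P * Matrix.of (fun (i : Fin p) (j : Fin k) => if (i : ℕ) < kr then 0 else (Pᵀ * Ustar) i j) := by
    have step : Ustar - Pkr * Pkrᵀ * Ustar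
        = P * (Pᵀ * Ustar)
          - P * Matrix.of (fun (i : Fin p) (j : Fin k) =>
              if (i : ℕ) < kr then (Pᵀ * Ustar) i j else 0) := by
      conv_lhs => rw [hUbarstar]
      congr 1
    rw [step, ← Matrix.mul_sub]
    congr 1
    ext i j
    by_cases hi : (i : ℕ) < kr <;> simp [Matrix.sub_apply, hi]
  have hDfr : (frobNorm (Ustar - Pkr * Pkrᵀ * Ustar)) ^ 2
      = ∑ i : Fin p, (if kr ≤ (i : ℕ) then ∑ j, ((Pᵀ * Ustar) i j) ^ 2 else 0) := by
    rw [hDelta, frobNorm_mul_orth hPorth, frobNorm_sq]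
    apply Finset.sum_congr rfl
    intro i _
    by_cases hi : (i : ℕ) < kr
    · simp [hi, Nat.not_le.mpr hi]
    · simp [hi, Nat.le_of_not_lt hi]
  -- trace lower bound
  have htrStarLow : ev ⟨kr, hkr⟩ * (frobNorm (Ustar - Pkr * Pkrᵀ * Ustar)) ^ 2
      ≤ Matrix.trace (Ustarᵀ * Lr * Ustar) := by
    rw [htrace Ustar, hDfr, Finset.mul_sum]
    apply Finset.sum_le_sum
    intro i _
    by_cases hi : kr ≤ (i : ℕ)
    · rw [if_pos hi]
      exact mul_le_mul_of_nonneg_right (hev (show (⟨kr, hkr⟩ : Fin p) ≤ i from hi))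
        (by positivity)
    · rw [if_neg hi, mul_zero]
      exact mul_nonneg (hevnn i) (by positivity)
  have htrStarNN : 0 ≤ Matrix.trace (Ustarᵀ * Lr * Ustar) := by
    rw [htrace Ustar]
    exact Finset.sum_nonneg fun i _ => mul_nonneg (hevnn i) (by positivity)
  -- optimality
  have heEq : frobNorm (Mr * Ubar - Util) = frobNorm Eu := by
    rw [hUtil, show Mr * Ubar - (Mr * Ubar + Eu) = -Eu from by abel, frobNorm_neg]
  have hopt := hmin Ubar
  rw [heEq] at hopt
  have hγev : 0 ≤ γr' * ev ⟨kr - 1, hkrm⟩ := mul_nonneg hγr'.le (hevnn _)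
  have hB1 : (frobNorm (Mr * Ustar - Util)) ^ 2
      ≤ (frobNorm Eu) ^ 2 + γr' * ev ⟨kr - 1, hkrm⟩ * (frobNorm Ubar) ^ 2 := by
    have h2 := mul_le_mul_of_nonneg_left htrBar hγr'.le
    have h3 := mul_nonneg hγr'.le htrStarNN
    linarith
  have hB2 : γr' * ev ⟨kr, hkr⟩ * (frobNorm (Ustar - Pkr * Pkrᵀ * Ustar)) ^ 2
      ≤ (frobNorm Eu) ^ 2 + γr' * ev ⟨kr - 1, hkrm⟩ * (frobNorm Ubar) ^ 2 := by
    have h := mul_le_mul_of_nonneg_left htrStarLow hγr'.le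
    have h2 := mul_le_mul_of_nonneg_left htrBar hγr'.le
    have h4 := sq_nonneg (frobNorm (Mr * Ustar - Util))
    linarith
  have hsB0 : 0 ≤ frobNorm Eu + Real.sqrt (γr' * ev ⟨kr - 1, hkrm⟩) * frobNorm Ubar :=
    add_nonneg he0 (mul_nonneg (Real.sqrt_nonneg _) hu0)
  have hsBsq : (frobNorm Eu) ^ 2 + γr' * ev ⟨kr - 1, hkrm⟩ * (frobNorm Ubar) ^ 2
      ≤ (frobNorm Eu + Real.sqrt (γr' * ev ⟨kr - 1, hkrm⟩) * frobNorm Ubar) ^ 2 := by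
    have hs := Real.sq_sqrt hγev
    nlinarith [mul_nonneg (mul_nonneg he0 (Real.sqrt_nonneg (γr' * ev ⟨kr - 1, hkrm⟩))) hu0]
  have ha0 : 0 ≤ frobNorm (Mr * Ustar - Util) := frobNorm_nonneg _
  have ha_le : frobNorm (Mr * Ustar - Util)
      ≤ frobNorm Eu + Real.sqrt (γr' * ev ⟨kr - 1, hkrm⟩) * frobNorm Ubar := by
    calc frobNorm (Mr * Ustar - Util)
        = Real.sqrt ((frobNorm (Mr * Ustar - Util)) ^ 2) := (Real.sqrt_sq ha0).symm
      _ ≤ Real.sqrt ((frobNorm Eu + Real.sqrt (γr' * ev ⟨kr - 1, hkrm⟩) * frobNorm Ubar) ^ 2) :=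
        Real.sqrt_le_sqrt (hB1.trans hsBsq)
      _ = _ := Real.sqrt_sq hsB0
  have hgl1 : 0 < γr' * ev ⟨kr, hkr⟩ := mul_pos hγr' hlam1
  have hd0 : 0 ≤ frobNorm (Ustar - Pkr * Pkrᵀ * Ustar) := frobNorm_nonneg _
  have hd_le : frobNorm (Ustar - Pkr * Pkrᵀ * Ustar)
      ≤ (frobNorm Eu + Real.sqrt (γr' * ev ⟨kr - 1, hkrm⟩) * frobNorm Ubar)
          / Real.sqrt (γr' * ev ⟨kr, hkr⟩) := by
    have hdd : (frobNorm (Ustar - Pkr * Pkrᵀ * Ustar)) ^ 2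
        ≤ (frobNorm Eu + Real.sqrt (γr' * ev ⟨kr - 1, hkrm⟩) * frobNorm Ubar) ^ 2
            / (γr' * ev ⟨kr, hkr⟩) := by
      rw [le_div_iff₀ hgl1]
      linarith [hB2, hsBsq]
    calc frobNorm (Ustar - Pkr * Pkrᵀ * Ustar)
        = Real.sqrt ((frobNorm (Ustar - Pkr * Pkrᵀ * Ustar)) ^ 2) := (Real.sqrt_sq hd0).symm
      _ ≤ Real.sqrt ((frobNorm Eu + Real.sqrt (γr' * ev ⟨kr - 1, hkrm⟩) * frobNorm Ubar) ^ 2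
            / (γr' * ev ⟨kr, hkr⟩)) := Real.sqrt_le_sqrt hdd
      _ = _ := by rw [Real.sqrt_div (sq_nonneg _), Real.sqrt_sq hsB0]
  have hXspan : ∀ j, inColSpan Pkr (fun i => (Pkr * Pkrᵀ * Ustar - Ubar) i j) := by
    intro j
    have h1 := inColSpan_cols_mul Pkr (Pkrᵀ * Ustar) j
    have h3 := inColSpan_sub h1 (hUbar j)
    have he : (fun i => (Pkr * Pkrᵀ * Ustar - Ubar) i j)
        = (fun i => (Pkr * (Pkrᵀ * Ustar)) i j) - (fun i => Ubar i j) := by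
      funext i; simp [Matrix.sub_apply, Matrix.mul_assoc]
    rw [he]; exact h3
  have hRIPX := rip_matrix (fun z hz => (hRIP z hz).1) _ hXspan
  have hMX : Mr * (Pkr * Pkrᵀ * Ustar - Ubar)
      = (Mr * Ustar - Util) + Eu + -(Mr * (Ustar - Pkr * Pkrᵀ * Ustar)) := by
    rw [Matrix.mul_sub, Matrix.mul_sub, hUtil]
    abel
  have hm_le : frobNorm (Mr * (Pkr * Pkrᵀ * Ustar - Ubar))
      ≤ frobNorm (Mr * Ustar - Util) + frobNorm Eu
        + frobNorm (Ustar - Pkr * Pkrᵀ * Ustar) := by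
    rw [hMX]
    have t1 := frobNorm_add_le ((Mr * Ustar - Util) + Eu)
      (-(Mr * (Ustar - Pkr * Pkrᵀ * Ustar)))
    have t2 := frobNorm_add_le (Mr * Ustar - Util) Eu
    have t3 := frobNorm_rowSel_le hMr (Ustar - Pkr * Pkrᵀ * Ustar)
    rw [frobNorm_neg] at t1
    linarith
  have h1δ : 0 < 1 - δ := by linarith
  have hm0 : 0 ≤ frobNorm (Mr * (Pkr * Pkrᵀ * Ustar - Ubar)) := frobNorm_nonneg _
  have hw0 : 0 ≤ frobNorm (Pkr * Pkrᵀ * Ustar - Ubar) := frobNorm_nonneg _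
  have hcnn : 0 ≤ (p : ℝ) / ((ρr : ℝ) * (1 - δ)) :=
    div_nonneg (Nat.cast_nonneg _) (mul_nonneg (Nat.cast_nonneg _) h1δ.le)
  have hw2 : (frobNorm (Pkr * Pkrᵀ * Ustar - Ubar)) ^ 2
      ≤ ((p : ℝ) / ((ρr : ℝ) * (1 - δ)))
        * (frobNorm (Mr * (Pkr * Pkrᵀ * Ustar - Ubar))) ^ 2 := by
    rw [← div_div, div_mul_eq_mul_div, le_div_iff₀ h1δ]
    linarith [hRIPX]
  have hw_le : frobNorm (Pkr * Pkrᵀ * Ustar - Ubar)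
      ≤ Real.sqrt ((p : ℝ) / ((ρr : ℝ) * (1 - δ)))
        * (frobNorm (Mr * Ustar - Util) + frobNorm Eu
            + frobNorm (Ustar - Pkr * Pkrᵀ * Ustar)) := by
    calc frobNorm (Pkr * Pkrᵀ * Ustar - Ubar)
        = Real.sqrt ((frobNorm (Pkr * Pkrᵀ * Ustar - Ubar)) ^ 2) := (Real.sqrt_sq hw0).symm
      _ ≤ Real.sqrt (((p : ℝ) / ((ρr : ℝ) * (1 - δ)))
            * (frobNorm (Mr * (Pkr * Pkrᵀ * Ustar - Ubar))) ^ 2) := Real.sqrt_le_sqrt hw2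
      _ = Real.sqrt ((p : ℝ) / ((ρr : ℝ) * (1 - δ)))
            * frobNorm (Mr * (Pkr * Pkrᵀ * Ustar - Ubar)) := by
          rw [Real.sqrt_mul hcnn, Real.sqrt_sq hm0]
      _ ≤ _ := mul_le_mul_of_nonneg_left hm_le (Real.sqrt_nonneg _)
  have hratio : Real.sqrt (γr' * ev ⟨kr - 1, hkrm⟩) / Real.sqrt (γr' * ev ⟨kr, hkr⟩)
      = Real.sqrt (ev ⟨kr - 1, hkrm⟩ / ev ⟨kr, hkr⟩) := by
    rw [← Real.sqrt_div hγev]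
    congr 1
    rw [mul_div_mul_left _ _ (ne_of_gt hγr')]
  have hsum_le : frobNorm (Mr * Ustar - Util) + frobNorm Eu
        + frobNorm (Ustar - Pkr * Pkrᵀ * Ustar)
      ≤ (2 + 1 / Real.sqrt (γr' * ev ⟨kr, hkr⟩)) * frobNorm Eu +
          (Real.sqrt (ev ⟨kr - 1, hkrm⟩ / ev ⟨kr, hkr⟩)
            + Real.sqrt (γr' * ev ⟨kr - 1, hkrm⟩)) * frobNorm Ubar := by
    have hident : (frobNorm Eu + Real.sqrt (γr' * ev ⟨kr - 1, hkrm⟩) * frobNorm Ubar)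
        + frobNorm Eu
        + (frobNorm Eu + Real.sqrt (γr' * ev ⟨kr - 1, hkrm⟩) * frobNorm Ubar)
            / Real.sqrt (γr' * ev ⟨kr, hkr⟩)
        = (2 + 1 / Real.sqrt (γr' * ev ⟨kr, hkr⟩)) * frobNorm Eu +
          (Real.sqrt (ev ⟨kr - 1, hkrm⟩ / ev ⟨kr, hkr⟩)
            + Real.sqrt (γr' * ev ⟨kr - 1, hkrm⟩)) * frobNorm Ubar := by
      rw [← hratio]; ring
    linarith
  have hmono : Real.sqrt ((p : ℝ) / ((ρr : ℝ) * (1 - δ)))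
      ≤ Real.sqrt (2 * p / ((ρr : ℝ) * (1 - δ))) := by
    apply Real.sqrt_le_sqrt
    rw [show (2 * p : ℝ) / ((ρr : ℝ) * (1 - δ))
        = (p : ℝ) / ((ρr : ℝ) * (1 - δ)) + (p : ℝ) / ((ρr : ℝ) * (1 - δ)) from by ring]
    linarith
  have hbr0 : 0 ≤ (2 + 1 / Real.sqrt (γr' * ev ⟨kr, hkr⟩)) * frobNorm Eu +
          (Real.sqrt (ev ⟨kr - 1, hkrm⟩ / ev ⟨kr, hkr⟩)
            + Real.sqrt (γr' * ev ⟨kr - 1, hkrm⟩)) * frobNorm Ubar := by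
    have h1 : 0 ≤ 1 / Real.sqrt (γr' * ev ⟨kr, hkr⟩) :=
      one_div_nonneg.mpr (Real.sqrt_nonneg _)
    have h2 := Real.sqrt_nonneg (ev ⟨kr - 1, hkrm⟩ / ev ⟨kr, hkr⟩)
    have h3 := Real.sqrt_nonneg (γr' * ev ⟨kr - 1, hkrm⟩)
    exact add_nonneg (mul_nonneg (by linarith) he0) (mul_nonneg (add_nonneg h2 h3) hu0)
  calc frobNorm (Pkr * Pkrᵀ * Ustar - Ubar)
      ≤ Real.sqrt ((p : ℝ) / ((ρr : ℝ) * (1 - δ)))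
        * (frobNorm (Mr * Ustar - Util) + frobNorm Eu
            + frobNorm (Ustar - Pkr * Pkrᵀ * Ustar)) := hw_le
    _ ≤ Real.sqrt ((p : ℝ) / ((ρr : ℝ) * (1 - δ)))
        * ((2 + 1 / Real.sqrt (γr' * ev ⟨kr, hkr⟩)) * frobNorm Eu +
          (Real.sqrt (ev ⟨kr - 1, hkrm⟩ / ev ⟨kr, hkr⟩)
            + Real.sqrt (γr' * ev ⟨kr - 1, hkrm⟩)) * frobNorm Ubar) :=
        mul_le_mul_of_nonneg_left hsum_le (Real.sqrt_nonneg _)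
    _ ≤ Real.sqrt (2 * p / ((ρr : ℝ) * (1 - δ)))
        * ((2 + 1 / Real.sqrt (γr' * ev ⟨kr, hkr⟩)) * frobNorm Eu +
          (Real.sqrt (ev ⟨kr - 1, hkrm⟩ / ev ⟨kr, hkr⟩)
            + Real.sqrt (γr' * ev ⟨kr - 1, hkrm⟩)) * frobNorm Ubar) :=
        mul_le_mul_of_nonneg_right hmono hbr0
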